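/- Let $G$ be a graph on $n \ge 2$ vertices with $m$ edges and let $0 \le \alpha < 1$. Then the $A_\alpha$-energy satisfies $E_{A_\alpha}(G) \le 4\alpha m (1 - \frac{1}{n})$ if $\alpha \ge \frac{n}{2(n-1)}$, and $E_{A_\alpha}(G) \le 2m(1 - \frac{2\alpha}{n})$ if $\alpha < \frac{n}{2(n-1)}$. -/

import Mathlib

open Finset Matrix

set_option linter.unusedSectionVars false
set_option maxHeartbeats 1000000

section AalphaHelpers

variable {V : Type*} [Fintype V] [DecidableEq V]

private lemma posSemidef_outer (z : V → ℝ) :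
    (Matrix.of fun i j => z i * z j).PosSemidef := by
  rw [Matrix.posSemidef_iff_dotProduct_mulVec]
  constructor
  · ext i j
    simp [Matrix.conjTranspose_apply, mul_comm]
  · intro x
    have h : star x ⬝ᵥ ((Matrix.of fun i j => z i * z j) *ᵥ x)
        = (∑ i, z i * x i) * (∑ j, z j * x j) := by
      simp only [dotProduct, mulVec, Matrix.of_apply, Pi.star_apply, star_trivial]
      rw [Finset.sum_mul_sum]
      refine Finset.sum_congr rfl fun i _ => ?_
      rw [Finset.mul_sum]
      refine Finset.sum_congr rfl fun j _ => ?_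
      ring
    rw [h]
    exact mul_self_nonneg _

private lemma trace_unitary_conj (U X : Matrix V V ℝ) (hU1 : star U * U = 1) :
    Matrix.trace (U * X * star U) = X.trace := by
  rw [Matrix.trace_mul_cycle, hU1, Matrix.one_mul]

private lemma tr_form (Q : Matrix V V ℝ) (hQ : star Q * Q = 1) (s μ : V → ℝ)
    (hs : ∀ i, |s i| ≤ 1) (hμ : ∀ j, 0 ≤ μ j) :
    |Matrix.trace (Matrix.diagonal s * Q * Matrix.diagonal μ * star Q)| ≤ ∑ j, μ j := by
  have hcol : ∀ j, ∑ i, Q i j * Q i j = 1 := by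
    intro j
    have h := congrArg (fun M : Matrix V V ℝ => M j j) hQ
    simpa [Matrix.mul_apply, Matrix.star_eq_conjTranspose, Matrix.conjTranspose_apply,
      Matrix.one_apply] using h
  have hentry : Matrix.trace (Matrix.diagonal s * Q * Matrix.diagonal μ * star Q)
      = ∑ i, ∑ j, s i * Q i j * (μ j * Q i j) := by
    simp [Matrix.trace, Matrix.mul_apply, Matrix.diagonal_apply, Matrix.star_eq_conjTranspose,
      Matrix.conjTranspose_apply, Finset.sum_mul, Finset.sum_ite_eq, Finset.mul_sum]
    refine Finset.sum_congr rfl fun i _ => Finset.sum_congr rfl fun j _ => ?_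
    ring
  rw [hentry]
  calc |∑ i, ∑ j, s i * Q i j * (μ j * Q i j)|
      ≤ ∑ i, ∑ j, |s i * Q i j * (μ j * Q i j)| := by
        refine (Finset.abs_sum_le_sum_abs _ _).trans ?_
        exact Finset.sum_le_sum fun i _ => Finset.abs_sum_le_sum_abs _ _
    _ ≤ ∑ i, ∑ j, μ j * (Q i j * Q i j) := by
        refine Finset.sum_le_sum fun i _ => Finset.sum_le_sum fun j _ => ?_
        have h : |s i * Q i j * (μ j * Q i j)| = |s i| * (μ j * (Q i j * Q i j)) := by
          rw [abs_mul, abs_mul, abs_mul, abs_of_nonneg (hμ j)]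
          rw [show |s i| * |Q i j| * (μ j * |Q i j|) = |s i| * (μ j * (|Q i j| * |Q i j|)) by ring,
            abs_mul_abs_self]
        rw [h]
        calc |s i| * (μ j * (Q i j * Q i j)) ≤ 1 * (μ j * (Q i j * Q i j)) := by
              refine mul_le_mul_of_nonneg_right (hs i) ?_
              exact mul_nonneg (hμ j) (mul_self_nonneg _)
          _ = μ j * (Q i j * Q i j) := one_mul _
    _ = ∑ j, μ j := by
        rw [Finset.sum_comm]
        refine Finset.sum_congr rfl fun j _ => ?_
        rw [← Finset.mul_sum, hcol j, mul_one]

private lemma tnorm_bound {ι : Type*} (H : Matrix V V ℝ) (hH : H.IsHermitian) (c : ℝ)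
    (F : Finset ι) (ε : ι → ℝ) (P : ι → Matrix V V ℝ)
    (hP : ∀ i ∈ F, (P i).PosSemidef)
    (hdec : H - c • 1 = ∑ i ∈ F, ε i • P i) :
    ∑ j, |hH.eigenvalues j - c| ≤ ∑ i ∈ F, |ε i| * (P i).trace := by
  set U : Matrix V V ℝ := (hH.eigenvectorUnitary : Matrix V V ℝ) with hUdef
  have hU1 : star U * U = 1 := Unitary.coe_star_mul_self hH.eigenvectorUnitary
  have hU2 : U * star U = 1 := Unitary.coe_mul_star_self hH.eigenvectorUnitary
  set lam := hH.eigenvalues with hlam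
  set s : V → ℝ := fun j => if lam j - c < 0 then (-1:ℝ) else 1 with hsdef
  have hs : ∀ j, |s j| ≤ 1 := by
    intro j
    simp only [hsdef]
    split_ifs <;> simp
  set S := U * Matrix.diagonal s * star U with hSdef
  have hspec : H = U * Matrix.diagonal lam * star U := by
    have h := hH.spectral_theorem
    simpa using h
  have hdiag : Matrix.diagonal lam - c • (1 : Matrix V V ℝ)
      = Matrix.diagonal (fun j => lam j - c) := by
    ext i j
    by_cases h : i = j <;>
      simp [Matrix.diagonal_apply, Matrix.one_apply, h]
  have hsub : H - c • 1 = U * Matrix.diagonal (fun j => lam j - c) * star U := by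
    have h1 : c • (1 : Matrix V V ℝ) = U * (c • 1) * star U := by
      rw [Matrix.mul_smul, Matrix.mul_one, Matrix.smul_mul, hU2]
    rw [hspec, h1, ← Matrix.sub_mul, ← Matrix.mul_sub, hdiag]
  have htr1 : Matrix.trace (S * (H - c • 1)) = ∑ j, |lam j - c| := by
    have hcollapse : S * (U * Matrix.diagonal (fun j => lam j - c) * star U)
        = U * Matrix.diagonal (fun j => s j * (lam j - c)) * star U := by
      rw [hSdef]
      have h2 : star U * (U * (Matrix.diagonal (fun j => lam j - c) * star U))
          = Matrix.diagonal (fun j => lam j - c) * star U := by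
        rw [← Matrix.mul_assoc, hU1, Matrix.one_mul]
      simp only [Matrix.mul_assoc]
      rw [h2, ← Matrix.mul_assoc (Matrix.diagonal s), Matrix.diagonal_mul_diagonal]
    rw [hsub, hcollapse, trace_unitary_conj U _ hU1, Matrix.trace_diagonal]
    refine Finset.sum_congr rfl fun j _ => ?_
    simp only [hsdef]
    split_ifs with h
    · rw [abs_of_neg h]; ring
    · rw [abs_of_nonneg (not_lt.mp h), one_mul]
  have hterm : ∀ i ∈ F, ε i * Matrix.trace (S * P i) ≤ |ε i| * (P i).trace := by
    intro i hi
    have hPi := hP i hi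
    set W : Matrix V V ℝ := (hPi.1.eigenvectorUnitary : Matrix V V ℝ) with hWdef
    have hW1 : star W * W = 1 := Unitary.coe_star_mul_self hPi.1.eigenvectorUnitary
    have hW2 : W * star W = 1 := Unitary.coe_mul_star_self hPi.1.eigenvectorUnitary
    set μ := hPi.1.eigenvalues with hmu
    have hμ : ∀ j, 0 ≤ μ j := hPi.eigenvalues_nonneg
    have hPspec : P i = W * Matrix.diagonal μ * star W := by
      have h := hPi.1.spectral_theorem
      simpa using h
    set Q : Matrix V V ℝ := star U * W with hQdef
    have hQstar : star Q = star W * U := by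
      rw [hQdef, StarMul.star_mul, star_star]
    have hQ1 : star Q * Q = 1 := by
      rw [hQstar, hQdef, Matrix.mul_assoc, ← Matrix.mul_assoc U, hU2, Matrix.one_mul, hW1]
    have hSP : S * P i = U * (Matrix.diagonal s * Q * Matrix.diagonal μ * star Q) * star U := by
      rw [hSdef, hPspec, hQdef, hQstar]
      have e1 : star W * (U * star U) = star W := by rw [hU2, Matrix.mul_one]
      simp only [Matrix.mul_assoc]
      rw [e1]
    have htrQ : Matrix.trace (S * P i)
        = Matrix.trace (Matrix.diagonal s * Q * Matrix.diagonal μ * star Q) := by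
      rw [hSP, trace_unitary_conj U _ hU1]
    have hb : |Matrix.trace (S * P i)| ≤ ∑ j, μ j := by
      rw [htrQ]; exact tr_form Q hQ1 s μ hs hμ
    have htrP : (P i).trace = ∑ j, μ j := by
      rw [hPspec, trace_unitary_conj W _ hW1, Matrix.trace_diagonal]
    calc ε i * Matrix.trace (S * P i) ≤ |ε i * Matrix.trace (S * P i)| := le_abs_self _
      _ = |ε i| * |Matrix.trace (S * P i)| := abs_mul _ _
      _ ≤ |ε i| * (P i).trace := by
          rw [htrP]; exact mul_le_mul_of_nonneg_left hb (abs_nonneg _)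
  calc ∑ j, |lam j - c| = Matrix.trace (S * (H - c • 1)) := htr1.symm
    _ = ∑ i ∈ F, ε i * Matrix.trace (S * P i) := by
        rw [hdec, Matrix.mul_sum, Matrix.trace_sum]
        refine Finset.sum_congr rfl fun i _ => ?_
        rw [Matrix.mul_smul, Matrix.trace_smul, smul_eq_mul]
    _ ≤ ∑ i ∈ F, |ε i| * (P i).trace := Finset.sum_le_sum hterm

noncomputable def epsF (G : SimpleGraph V) [DecidableRel G.Adj] (α N : ℝ) :
    (V × V) × Fin 3 → ℝ :=
  fun p => if G.Adj p.1.1 p.1.2 then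
    (if p.2 = 0 then ((α - 2*α/N) + (1-α))/4
     else if p.2 = 1 then ((α - 2*α/N) - (1-α))/4
     else -(α/N)) else 0

noncomputable def PF : (V × V) × Fin 3 → Matrix V V ℝ :=
  fun p =>
    if p.2 = 0 then Matrix.of (fun i j =>
      (if i = p.1.1 ∨ i = p.1.2 then (1:ℝ) else 0) * (if j = p.1.1 ∨ j = p.1.2 then (1:ℝ) else 0))
    else if p.2 = 1 then Matrix.of (fun i j =>
      (if i = p.1.1 then (1:ℝ) else if i = p.1.2 then -1 else 0) *
      (if j = p.1.1 then (1:ℝ) else if j = p.1.2 then -1 else 0))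
    else Matrix.diagonal (fun i => if i = p.1.1 ∨ i = p.1.2 then 0 else 1)

private lemma PF_posSemidef (p : (V × V) × Fin 3) : (PF p).PosSemidef := by
  dsimp only [PF]
  split_ifs
  · exact posSemidef_outer _
  · exact posSemidef_outer _
  · refine Matrix.posSemidef_diagonal_iff.mpr fun i => ?_
    split_ifs <;> norm_num

private lemma hdeg_sum (G : SimpleGraph V) [DecidableRel G.Adj] (i : V) :
    ∑ v : V, (if G.Adj i v then (1:ℝ) else 0) = G.degree i := by
  rw [Finset.sum_boole, SimpleGraph.degree, SimpleGraph.neighborFinset_eq_filter]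

private lemma hdeg_sum' (G : SimpleGraph V) [DecidableRel G.Adj] (i : V) :
    ∑ u : V, (if G.Adj u i then (1:ℝ) else 0) = G.degree i := by
  rw [← hdeg_sum G i]
  exact Finset.sum_congr rfl fun u _ => if_congr (G.adj_comm u i) rfl rfl

private lemma hdeg_two (G : SimpleGraph V) [DecidableRel G.Adj] :
    ∑ u : V, ∑ v : V, (if G.Adj u v then (1:ℝ) else 0) = 2 * (#G.edgeFinset : ℝ) := by
  rw [Finset.sum_congr rfl fun u (_ : u ∈ univ) => hdeg_sum G u, ← Nat.cast_sum,
    SimpleGraph.sum_degrees_eq_twice_card_edges]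
  push_cast; ring

private lemma decomp (G : SimpleGraph V) [DecidableRel G.Adj] (α : ℝ) :
    (α • Matrix.diagonal (fun v => (G.degree v : ℝ)) + (1 - α) • G.adjMatrix ℝ)
      - (2 * α * (#G.edgeFinset : ℝ) / (Fintype.card V : ℝ)) • 1
    = ∑ p : (V × V) × Fin 3, epsF G α (Fintype.card V : ℝ) p • PF p := by
  set N : ℝ := (Fintype.card V : ℝ)
  ext i j
  rw [Matrix.sum_apply]
  simp only [Matrix.smul_apply, smul_eq_mul]
  rw [Fintype.sum_prod_type]
  simp only [Fin.sum_univ_three]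
  rw [Fintype.sum_prod_type]
  simp only [epsF, PF, Matrix.of_apply, Matrix.diagonal_apply, Matrix.sub_apply,
    Matrix.add_apply, Matrix.smul_apply, smul_eq_mul, SimpleGraph.adjMatrix_apply,
    Matrix.one_apply, Fin.reduceEq, reduceIte]
  by_cases hij : i = j
  · subst hij
    simp only [eq_self_iff_true, if_true]
    rw [if_neg (G.irrefl : ¬ G.Adj i i)]
    have hterm : ∀ u v : V,
        (if G.Adj u v then ((α - 2*α/N) + (1-α))/4 else 0) *
          ((if i = u ∨ i = v then (1:ℝ) else 0) * (if i = u ∨ i = v then (1:ℝ) else 0))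
        + (if G.Adj u v then ((α - 2*α/N) - (1-α))/4 else 0) *
          ((if i = u then (1:ℝ) else if i = v then -1 else 0) *
           (if i = u then (1:ℝ) else if i = v then -1 else 0))
        + (if G.Adj u v then -(α/N) else 0) * (if i = u ∨ i = v then (0:ℝ) else 1)
        = (α/2) * (if u = i then (if G.Adj u v then (1:ℝ) else 0) else 0)
          + (α/2) * (if v = i then (if G.Adj u v then (1:ℝ) else 0) else 0)
          - (α/N) * (if G.Adj u v then (1:ℝ) else 0) := by
      intro u v
      by_cases hadj : G.Adj u v
      · have hne : u ≠ v := G.ne_of_adj hadj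
        simp only [hadj, if_true]
        split_ifs
        all_goals try ring
        all_goals try tauto
        all_goals subst_vars
        all_goals simp_all
      · simp [hadj]
    simp only [hterm]
    simp only [Finset.sum_sub_distrib, Finset.sum_add_distrib]
    have hA : ∑ u : V, ∑ v : V,
        ((α/2) * (if u = i then (if G.Adj u v then (1:ℝ) else 0) else 0))
        = (α/2) * (G.degree i : ℝ) := by
      rw [Finset.sum_eq_single i]
      · simp only [if_pos rfl, eq_self_iff_true, if_true, ← Finset.mul_sum, hdeg_sum]
      · intro u _ hu; simp [hu]
      · intro h; simp at h
    have hB : ∑ u : V, ∑ v : V,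
        ((α/2) * (if v = i then (if G.Adj u v then (1:ℝ) else 0) else 0))
        = (α/2) * (G.degree i : ℝ) := by
      rw [Finset.sum_comm, Finset.sum_eq_single i]
      · simp only [if_pos rfl, eq_self_iff_true, if_true, ← Finset.mul_sum, hdeg_sum']
      · intro v _ hv; simp [hv]
      · intro h; simp at h
    have hC : ∑ u : V, ∑ v : V, ((α/N) * (if G.Adj u v then (1:ℝ) else 0))
        = (α/N) * (2 * (#G.edgeFinset : ℝ)) := by
      simp only [← Finset.mul_sum]
      rw [hdeg_two]
    rw [hA, hB, hC]
    ring
  · simp only [hij, if_false]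
    have hterm : ∀ u v : V,
        (if G.Adj u v then ((α - 2*α/N) + (1-α))/4 else 0) *
          ((if i = u ∨ i = v then (1:ℝ) else 0) * (if j = u ∨ j = v then (1:ℝ) else 0))
        + (if G.Adj u v then ((α - 2*α/N) - (1-α))/4 else 0) *
          ((if i = u then (1:ℝ) else if i = v then -1 else 0) *
           (if j = u then (1:ℝ) else if j = v then -1 else 0))
        + (if G.Adj u v then -(α/N) else 0) * 0
        = (if i = u then (if j = v then (if G.Adj i j then (1-α)/2 else 0) else 0) else 0)
          + (if j = u then (if i = v then (if G.Adj i j then (1-α)/2 else 0) else 0) else 0) := by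
      intro u v
      by_cases hadj : G.Adj u v
      · have hne : u ≠ v := G.ne_of_adj hadj
        simp only [hadj, if_true]
        by_cases h1 : i = u <;> by_cases h2 : i = v <;> by_cases h3 : j = u <;>
          by_cases h4 : j = v <;>
          subst_vars <;> simp_all [G.adj_comm] <;> ring
      · simp only [hadj, if_false]
        split_ifs <;> subst_vars <;> simp_all [G.adj_comm]
    simp only [hterm]
    simp only [Finset.sum_add_distrib]
    simp only [Finset.sum_ite_irrel, Finset.sum_ite_eq, Finset.sum_const_zero,
      Finset.mem_univ, if_true]
    split_ifs <;> ring

private lemma ind_split (u v : V) (hne : u ≠ v) (i : V) :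
    (if i = u ∨ i = v then (1:ℝ) else 0)
      = (if i = u then (1:ℝ) else 0) + (if i = v then (1:ℝ) else 0) := by
  split_ifs
  all_goals try ring
  all_goals try tauto
  all_goals subst_vars
  all_goals simp_all

private lemma sum_ind_two (u v : V) (hne : u ≠ v) :
    ∑ i : V, (if i = u ∨ i = v then (1:ℝ) else 0) = 2 := by
  simp only [ind_split u v hne, Finset.sum_add_distrib, Finset.sum_ite_eq',
    Finset.mem_univ, if_true]
  norm_num

private lemma trace_X (u v : V) (hne : u ≠ v) :
    (Matrix.of fun i j =>
      (if i = u ∨ i = v then (1:ℝ) else 0) * (if j = u ∨ j = v then (1:ℝ) else 0)).trace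
      = 2 := by
  have h : ∀ i : V, ((if i = u ∨ i = v then (1:ℝ) else 0) * (if i = u ∨ i = v then (1:ℝ) else 0))
      = (if i = u ∨ i = v then (1:ℝ) else 0) := by
    intro i; split_ifs <;> ring
  simp only [Matrix.trace, Matrix.diag, Matrix.of_apply]
  rw [Finset.sum_congr rfl fun i _ => h i, sum_ind_two u v hne]

private lemma trace_Y (u v : V) (hne : u ≠ v) :
    (Matrix.of fun i j =>
      (if i = u then (1:ℝ) else if i = v then -1 else 0) *
      (if j = u then (1:ℝ) else if j = v then -1 else 0)).trace = 2 := by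
  have h : ∀ i : V, ((if i = u then (1:ℝ) else if i = v then -1 else 0) *
      (if i = u then (1:ℝ) else if i = v then -1 else 0))
      = (if i = u ∨ i = v then (1:ℝ) else 0) := by
    intro i
    split_ifs
    all_goals try ring
    all_goals try tauto
  simp only [Matrix.trace, Matrix.diag, Matrix.of_apply]
  rw [Finset.sum_congr rfl fun i _ => h i, sum_ind_two u v hne]

private lemma trace_D (u v : V) (hne : u ≠ v) :
    (Matrix.diagonal (fun i : V => if i = u ∨ i = v then (0:ℝ) else 1)).trace
      = (Fintype.card V : ℝ) - 2 := by
  rw [Matrix.trace_diagonal]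
  have h : ∀ i : V, (if i = u ∨ i = v then (0:ℝ) else 1)
      = 1 - (if i = u ∨ i = v then (1:ℝ) else 0) := by
    intro i; split_ifs <;> ring
  rw [Finset.sum_congr rfl fun i _ => h i, Finset.sum_sub_distrib, sum_ind_two u v hne,
    Finset.sum_const, Finset.card_univ]
  simp

private lemma eps_trace_sum (G : SimpleGraph V) [DecidableRel G.Adj] (α : ℝ) :
    ∑ p : (V × V) × Fin 3, |epsF G α (Fintype.card V : ℝ) p| * (PF p).trace
    = 2 * (#G.edgeFinset : ℝ) *
      (|((α - 2*α/(Fintype.card V : ℝ)) + (1-α))/4| * 2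
       + |((α - 2*α/(Fintype.card V : ℝ)) - (1-α))/4| * 2
       + |-(α/(Fintype.card V : ℝ))| * ((Fintype.card V : ℝ) - 2)) := by
  set N : ℝ := (Fintype.card V : ℝ) with hNdef
  set K : ℝ := |((α - 2*α/N) + (1-α))/4| * 2 + |((α - 2*α/N) - (1-α))/4| * 2
    + |-(α/N)| * (N - 2) with hKdef
  rw [Fintype.sum_prod_type]
  simp only [Fin.sum_univ_three]
  rw [Fintype.sum_prod_type]
  have hterm : ∀ u v : V,
      (|epsF G α N ((u,v),0)| * (PF ((u,v),0)).trace
      + |epsF G α N ((u,v),1)| * (PF ((u,v),1)).trace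
      + |epsF G α N ((u,v),2)| * (PF ((u,v),2)).trace)
      = (if G.Adj u v then (1:ℝ) else 0) * K := by
    intro u v
    by_cases hadj : G.Adj u v
    · have hne : u ≠ v := G.ne_of_adj hadj
      simp only [epsF, PF, hadj, if_true, Fin.reduceEq, reduceIte]
      rw [trace_X u v hne, trace_Y u v hne, trace_D u v hne, hKdef]
      ring
    · simp [epsF, hadj]
  rw [Finset.sum_congr rfl fun u (_ : u ∈ univ) =>
    Finset.sum_congr rfl fun v (_ : v ∈ univ) => hterm u v]
  simp only [← Finset.sum_mul]
  rw [hdeg_two]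

end AalphaHelpers

/-- For a graph `G` on `n ≥ 2` vertices with `m` edges and `0 ≤ α < 1`, the
`A_α`-energy `∑ i, |ρ i - 2αm/n|` satisfies `E ≤ 4 α m (1 - 1/n)` when
`α ≥ n / (2(n-1))`, and `E ≤ 2 m (1 - 2α/n)` when `α < n / (2(n-1))`. -/
theorem energy_Aalpha_upper_bound {V : Type*} [Fintype V] [DecidableEq V]
    (G : SimpleGraph V) [DecidableRel G.Adj] (hn : 2 ≤ Fintype.card V)
    (α : ℝ) (hα0 : 0 ≤ α) (hα1 : α < 1)
    (hH : (α • Matrix.diagonal (fun v => (G.degree v : ℝ))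
        + (1 - α) • G.adjMatrix ℝ).IsHermitian) :
    (((Fintype.card V : ℝ) / (2 * ((Fintype.card V : ℝ) - 1)) ≤ α →
      ∑ i, |hH.eigenvalues i - 2 * α * (G.edgeFinset.card : ℝ) / (Fintype.card V : ℝ)|
        ≤ 4 * α * (G.edgeFinset.card : ℝ) * (1 - 1 / (Fintype.card V : ℝ)))) ∧
    ((α < (Fintype.card V : ℝ) / (2 * ((Fintype.card V : ℝ) - 1)) →
      ∑ i, |hH.eigenvalues i - 2 * α * (G.edgeFinset.card : ℝ) / (Fintype.card V : ℝ)|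
        ≤ 2 * (G.edgeFinset.card : ℝ) * (1 - 2 * α / (Fintype.card V : ℝ)))) := by
  set N : ℝ := (Fintype.card V : ℝ) with hNdef
  set m : ℝ := (G.edgeFinset.card : ℝ) with hmdef
  have hN2 : (2:ℝ) ≤ N := by rw [hNdef]; exact_mod_cast hn
  have hN0 : (0:ℝ) < N := by linarith
  have hm0 : (0:ℝ) ≤ m := by rw [hmdef]; exact Nat.cast_nonneg _
  have hb0 : (0:ℝ) < 1 - α := by linarith
  have ha0 : (0:ℝ) ≤ α - 2*α/N := by
    rw [sub_nonneg, div_le_iff₀ hN0]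
    nlinarith
  have h2N : (0:ℝ) < 2*(N-1) := by linarith
  have key := tnorm_bound _ hH (2 * α * m / N) Finset.univ
    (epsF G α N) PF (fun p _ => PF_posSemidef p) (decomp G α)
  rw [eps_trace_sum G α] at key
  rw [← hNdef, ← hmdef] at key
  rw [abs_neg, abs_of_nonneg (show (0:ℝ) ≤ α/N by positivity)] at key
  rw [abs_of_nonneg (show (0:ℝ) ≤ ((α - 2*α/N) + (1-α))/4 by linarith)] at key
  have hkey2 : (α - 2*α/N) - (1-α) = α*(2*(N-1))/N - 1 := by
    field_simp
    ring
  have hNne : N ≠ 0 := ne_of_gt hN0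
  constructor
  · intro hc
    rw [div_le_iff₀ h2N] at hc
    have hpos : (0:ℝ) ≤ ((α - 2*α/N) - (1-α))/4 := by
      have : (0:ℝ) ≤ (α - 2*α/N) - (1-α) := by
        rw [hkey2, sub_nonneg, le_div_iff₀ hN0]
        linarith
      linarith
    rw [abs_of_nonneg hpos] at key
    have h3 : (0:ℝ) ≤ α*m/N := by positivity
    calc ∑ i, |hH.eigenvalues i - 2 * α * m / N| ≤ _ := key
      _ = 4*α*m - 8*(α*m/N) := by field_simp; ring
      _ ≤ 4*α*m - 4*(α*m/N) := by linarith
      _ = 4*α*m*(1-1/N) := by field_simp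
  · intro hc
    rw [lt_div_iff₀ h2N] at hc
    have hneg : ((α - 2*α/N) - (1-α))/4 ≤ 0 := by
      have : (α - 2*α/N) - (1-α) ≤ 0 := by
        rw [hkey2, sub_nonpos, div_le_one hN0]
        linarith
      linarith
    rw [abs_of_nonpos hneg] at key
    calc ∑ i, |hH.eigenvalues i - 2 * α * m / N| ≤ _ := key
      _ = 2*m*(1 - 2*α/N) := by field_simp; ring
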